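/- Let (a_n) be a non-increasing sequence of positive reals with ∑ a_n < ∞ and set r_n = ∑_{m=n}^∞ a_m. If there exists δ ∈ (0,1) such that a_n^{δ-1}·r_n → 0 as n → ∞, then for every c > δ the series ∑ a_n^c converges. -/

import Mathlib

lemma aux_concave (x y γ : ℝ) (hy : 0 < y) (hxy : y ≤ x) (hγ0 : 0 < γ) (hγ1 : γ ≤ 1) :
    γ * ((x - y) * x ^ (γ - 1)) ≤ x ^ γ - y ^ γ := by
  have hx : 0 < x := lt_of_lt_of_le hy hxy
  have hdiv : (0:ℝ) ≤ y / x := by positivity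
  have amgm := Real.geom_mean_le_arith_mean2_weighted hγ0.le (by linarith : (0:ℝ) ≤ 1 - γ)
    hdiv zero_le_one (by ring)
  rw [Real.one_rpow, mul_one, mul_one, Real.div_rpow hy.le hx.le] at amgm
  have hX : 0 < x ^ γ := Real.rpow_pos_of_pos hx γ
  rw [div_le_iff₀ hX] at amgm
  have h1 : x * x ^ (γ - 1) = x ^ γ := by
    rw [← Real.rpow_one_add' hx.le (by linarith : (1:ℝ) + (γ-1) ≠ 0)]
    norm_num
  have h2 : (y / x) * x ^ γ = y * x ^ (γ - 1) := by
    rw [Real.rpow_sub hx, Real.rpow_one]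
    field_simp
  nlinarith [amgm, h1, h2]

theorem stmt_17 (a : ℕ → ℝ) (hpos : ∀ n, 0 < a n) (hmono : Antitone a)
    (hsum : Summable a)
    (r : ℕ → ℝ) (hr : ∀ n, r n = ∑' m : ℕ, a (n + m))
    (δ : ℝ) (hδ0 : 0 < δ) (hδ1 : δ < 1)
    (h : Filter.Tendsto (fun n : ℕ => a n ^ (δ - 1) * r n) Filter.atTop (nhds 0)) :
    ∀ c : ℝ, δ < c → Summable (fun n : ℕ => a n ^ c) := by
  -- basic facts about r
  have htail : ∀ n : ℕ, Summable (fun m => a (n + m)) := by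
    intro n
    have := (summable_nat_add_iff n).mpr hsum
    refine this.congr ?_
    intro m; simp [add_comm]
  have hrpos : ∀ n, 0 < r n := by
    intro n
    rw [hr n]
    have h1 : a (n + 0) ≤ ∑' m, a (n + m) :=
      Summable.le_tsum (htail n) 0 (fun m _ => (hpos _).le)
    have := hpos (n + 0)
    linarith
  have hrec : ∀ n, r n = a n + r (n + 1) := by
    intro n
    rw [hr n, hr (n+1), Summable.tsum_eq_zero_add (htail n), Nat.add_zero]
    congr 1
    exact tsum_congr fun m => by rw [show n + (m + 1) = n + 1 + m by omega]
  intro c hc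
  -- reduce to c' := min c ((1+δ)/2) ∈ (δ, 1)
  set c' : ℝ := min c ((1 + δ) / 2) with hc'def
  have hc'δ : δ < c' := lt_min hc (by linarith)
  have hc'1 : c' < 1 := lt_of_le_of_lt (min_le_right _ _) (by linarith)
  have hc'c : c' ≤ c := min_le_left _ _
  set γ : ℝ := (c' - δ) / (1 - δ) with hγdef
  have h1δ : (0:ℝ) < 1 - δ := by linarith
  have hγ0 : 0 < γ := div_pos (by linarith) h1δ
  have hγ1 : γ < 1 := (div_lt_one h1δ).mpr (by linarith)
  have hexp : 1 + (1 - δ) * (γ - 1) = c' := by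
    rw [hγdef]; field_simp; ring
  -- summability of g n = a n * r n ^ (γ - 1)
  set g : ℕ → ℝ := fun n => a n * r n ^ (γ - 1) with hgdef
  have hgpos : ∀ n, 0 < g n := fun n =>
    mul_pos (hpos n) (Real.rpow_pos_of_pos (hrpos n) _)
  have hkey : ∀ n, γ * g n ≤ r n ^ γ - r (n+1) ^ γ := by
    intro n
    have h1 : a n = r n - r (n+1) := by have := hrec n; linarith
    have h2 : r (n+1) ≤ r n := by have := hrec n; have := hpos n; linarith
    have := aux_concave (r n) (r (n+1)) γ (hrpos (n+1)) h2 hγ0 hγ1.le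
    rw [hgdef]; dsimp only; rw [h1]; exact this
  have hgsum : Summable g := by
    have hsum' : Summable (fun n => γ * g n) := by
      apply summable_of_sum_range_le (c := r 0 ^ γ)
      · intro n; exact (mul_pos hγ0 (hgpos n)).le
      · intro n
        calc ∑ i ∈ Finset.range n, γ * g i
            ≤ ∑ i ∈ Finset.range n, (r i ^ γ - r (i+1) ^ γ) :=
              Finset.sum_le_sum fun i _ => hkey i
          _ = r 0 ^ γ - r n ^ γ := Finset.sum_range_sub' (fun i => r i ^ γ) n
          _ ≤ r 0 ^ γ := by
              have : 0 < r n ^ γ := Real.rpow_pos_of_pos (hrpos n) _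
              linarith
    have := hsum'.mul_left γ⁻¹
    refine this.congr fun n => ?_
    field_simp
  -- eventual bounds
  have hev1 : ∀ᶠ n in Filter.atTop, a n ^ (δ - 1) * r n < 1 :=
    h.eventually_lt_const one_pos
  have ha0 : Filter.Tendsto a Filter.atTop (nhds 0) := hsum.tendsto_atTop_zero
  have hev2 : ∀ᶠ n in Filter.atTop, a n < 1 := ha0.eventually_lt_const one_pos
  obtain ⟨N, hN⟩ := (hev1.and hev2).exists_forall_of_atTop
  -- for n ≥ N :  a n ^ c ≤ g n
  have hbound : ∀ n, N ≤ n → a n ^ c ≤ g n := by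
    intro n hn
    obtain ⟨hn1, hn2⟩ := hN n hn
    have hap : 0 < a n := hpos n
    have hp : 0 < a n ^ (δ - 1) := Real.rpow_pos_of_pos hap _
    -- r n ≤ a n ^ (1 - δ)
    have hrle : r n ≤ a n ^ (1 - δ) := by
      have hinv : a n ^ (1 - δ) = (a n ^ (δ - 1))⁻¹ := by
        rw [show (1 - δ) = -(δ - 1) by ring, Real.rpow_neg hap.le]
      rw [hinv]
      nlinarith [hn1, hp, mul_inv_cancel₀ hp.ne', hrpos n,
        mul_pos hp (hrpos n)]
    -- r n ^ (γ - 1) ≥ (a n ^ (1-δ)) ^ (γ - 1)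
    have hr1 : (a n ^ (1 - δ)) ^ (γ - 1) ≤ r n ^ (γ - 1) := by
      apply Real.rpow_le_rpow_of_nonpos (hrpos n) hrle (by linarith)
    have hr2 : (a n ^ (1 - δ)) ^ (γ - 1) = a n ^ ((1 - δ) * (γ - 1)) := by
      rw [← Real.rpow_mul hap.le]
    have hstep1 : a n ^ c' ≤ g n := by
      rw [hgdef]; dsimp only
      calc a n ^ c' = a n ^ (1 + (1 - δ) * (γ - 1)) := by rw [hexp]
        _ = a n * a n ^ ((1 - δ) * (γ - 1)) := by
            rw [Real.rpow_add hap, Real.rpow_one]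
        _ ≤ a n * r n ^ (γ - 1) := by
            apply mul_le_mul_of_nonneg_left _ hap.le
            rw [← hr2]; exact hr1
    have : a n ^ c ≤ a n ^ c' :=
      Real.rpow_le_rpow_of_exponent_ge hap hn2.le hc'c
    linarith
  -- conclude by comparison after shifting
  rw [← summable_nat_add_iff N]
  apply Summable.of_nonneg_of_le (fun n => (Real.rpow_pos_of_pos (hpos _) _).le)
    (fun n => hbound (n + N) (Nat.le_add_left N n))
  exact (summable_nat_add_iff N).mpr hgsum
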